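/- Fix c, ζ ∈ (0,1) with c₀ := 1 − c(1+ζ) > 0, let ω ⊂ ℝ^d be bounded open and M ⊂ ∂ω closed. For x ∈ ω set B_x := closed ball of radius c·dist(x,M) around x and B̂_x := closed ball of radius (1+ζ)c·dist(x,M) around x. Then there is a countable set of points (x_i) ⊂ ω and N ∈ ℕ depending only on d, c, ζ such that: (1) the balls B_{x_i} cover ω; (2) every point of ℝ^d belongs to at most N of the stretched balls B̂_{x_i}. -/
import Mathlib
open MeasureTheory Metric Set

lemma aux_count {d : ℕ} (Fs : Finset (EuclideanSpace ℝ (Fin d)))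
    (ρ : EuclideanSpace ℝ (Fin d) → ℝ) (y : EuclideanSpace ℝ (Fin d)) (R a : ℝ)
    (ha : 0 < a) (hR : 0 ≤ R)
    (hdisj : (↑Fs : Set (EuclideanSpace ℝ (Fin d))).PairwiseDisjoint
      (fun p => closedBall p (ρ p)))
    (hρ : ∀ p ∈ Fs, a ≤ ρ p)
    (hsub : ∀ p ∈ Fs, closedBall p (ρ p) ⊆ closedBall y R) :
    (Fs.card : ℝ) * a ^ d ≤ R ^ d := by
  set μ : Measure (EuclideanSpace ℝ (Fin d)) := volume
  have hfr : Module.finrank ℝ (EuclideanSpace ℝ (Fin d)) = d := finrank_euclideanSpace_fin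
  set μB := μ (ball (0 : EuclideanSpace ℝ (Fin d)) 1) with hμB
  have hμB0 : μB ≠ 0 := (measure_ball_pos μ _ one_pos).ne'
  have hμBt : μB ≠ ⊤ := measure_ball_lt_top.ne
  have hsum : ∑ p ∈ Fs, μ (closedBall p (ρ p)) ≤ ENNReal.ofReal (R ^ d) * μB := by
    rw [← measure_biUnion_finset hdisj (fun p _ => measurableSet_closedBall)]
    calc μ (⋃ p ∈ Fs, closedBall p (ρ p)) ≤ μ (closedBall y R) :=
          measure_mono (Set.iUnion₂_subset hsub)
      _ = ENNReal.ofReal (R ^ d) * μB := by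
          rw [Measure.addHaar_closedBall μ y hR, hfr]
  have hterm : ∀ p ∈ Fs, ENNReal.ofReal (a ^ d) * μB ≤ μ (closedBall p (ρ p)) := by
    intro p hp
    rw [Measure.addHaar_closedBall μ p (le_trans ha.le (hρ p hp)), hfr]
    exact mul_le_mul_left (ENNReal.ofReal_le_ofReal
      (pow_le_pow_left₀ ha.le (hρ p hp) d)) μB
  have h1 := (Finset.card_nsmul_le_sum Fs _ _ hterm).trans hsum
  rw [nsmul_eq_mul, ← mul_assoc] at h1
  have h2 := (ENNReal.mul_le_mul_iff_left hμB0 hμBt).mp h1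
  rw [← ENNReal.ofReal_natCast, ← ENNReal.ofReal_mul (by positivity)] at h2
  exact (ENNReal.ofReal_le_ofReal_iff (by positivity)).mp h2

theorem besicovitch_covering_dist_radii {d : ℕ} (c ζ : ℝ)
    (hc : c ∈ Set.Ioo (0:ℝ) 1) (hζ : ζ ∈ Set.Ioo (0:ℝ) 1)
    (hc₀ : 0 < 1 - c * (1 + ζ)) :
    ∃ N : ℕ,
      ∀ (ω : Set (EuclideanSpace ℝ (Fin d))), IsOpen ω → Bornology.IsBounded ω →
        ω.Nonempty →
      ∀ (M : Set (EuclideanSpace ℝ (Fin d))), IsClosed M → M ⊆ frontier ω →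
        M.Nonempty →
      ∃ x : ℕ → EuclideanSpace ℝ (Fin d),
        (∀ i, x i ∈ ω) ∧
        ω ⊆ ⋃ i, Metric.closedBall (x i) (c * Metric.infDist (x i) M) ∧
        ∀ y : EuclideanSpace ℝ (Fin d),
          {i | y ∈ Metric.closedBall (x i)
              ((1 + ζ) * c * Metric.infDist (x i) M)}.encard ≤ (N : ℕ∞) := by
  classical
  obtain ⟨hc0, hc1⟩ := hc
  obtain ⟨hζ0, hζ1⟩ := hζ
  set c₀ : ℝ := 1 - c * (1 + ζ) with hc₀def
  set K : ℝ := (30 / (c * c₀)) ^ d with hKdef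
  have hK0 : 0 ≤ K := by positivity
  refine ⟨⌈K⌉₊ + 1, ?_⟩
  intro ω hω hbd hωne M hMcl hMfr hMne
  have hfrω : ∀ w, w ∈ frontier ω → w ∉ ω := by
    intro w hw
    rw [hω.frontier_eq] at hw
    exact hw.2
  have hdist_pos : ∀ x ∈ ω, 0 < infDist x M := by
    intro x hx
    exact (hMcl.notMem_iff_infDist_pos hMne).mp (fun hxM => hfrω x (hMfr hxM) hx)
  set f : EuclideanSpace ℝ (Fin d) → Set (EuclideanSpace ℝ (Fin d)) :=
    fun p => closedBall p (c / 5 * infDist p M) with hfdef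
  set S : Set (Set (EuclideanSpace ℝ (Fin d))) :=
    {t | t ⊆ ω ∧ t.PairwiseDisjoint f} with hSdef
  obtain ⟨t, htmax⟩ := zorn_subset S (by
    intro ch hchS hchain
    refine ⟨⋃₀ ch, ⟨sUnion_subset fun s hs => (hchS hs).1, ?_⟩, fun s hs => subset_sUnion_of_mem hs⟩
    intro p hp q hq hpq
    obtain ⟨s1, hs1, hp1⟩ := hp
    obtain ⟨s2, hs2, hq2⟩ := hq
    rcases hchain.total hs1 hs2 with h | h
    · exact (hchS hs2).2 (h hp1) hq2 hpq
    · exact (hchS hs1).2 hp1 (h hq2) hpq)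
  have htS : t ∈ S := htmax.prop
  have htω : t ⊆ ω := htS.1
  have htdisj : t.PairwiseDisjoint f := htS.2
  -- countability of t
  have htcount : t.Countable := by
    refine PairwiseDisjoint.countable_of_isOpen
      (s := fun p => ball p (c / 5 * infDist p M)) (a := t)
      (fun p hp q hq hpq => (htdisj hp hq hpq).mono ball_subset_closedBall
        ball_subset_closedBall)
      (fun p _ => isOpen_ball) (fun p hp => ?_)
    exact nonempty_ball.mpr (by have := hdist_pos p (htω hp); positivity)
  -- covering
  have hcover : ∀ x ∈ ω, ∃ p ∈ t, x ∈ closedBall p (c * infDist p M) := by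
    intro x hx
    by_cases hxt : x ∈ t
    · exact ⟨x, hxt, mem_closedBall_self (by have := hdist_pos x hx; positivity)⟩
    have hmain : ¬ ∀ p ∈ t, Disjoint (f x) (f p) := by
      intro hall
      have hins : insert x t ∈ S :=
        ⟨insert_subset hx htω, htdisj.insert (fun p hp _ => hall p hp)⟩
      exact hxt (htmax.2 hins (subset_insert x t) (mem_insert x t))
    push_neg at hmain
    obtain ⟨p, hpt, hndis⟩ := hmain
    obtain ⟨w, hw1, hw2⟩ := Set.not_disjoint_iff.mp hndis
    rw [hfdef] at hw1 hw2
    simp only [mem_closedBall] at hw1 hw2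
    have hxp : dist x p ≤ c / 5 * (infDist x M + infDist p M) := by
      have h3 : dist x p ≤ dist w x + dist w p := dist_triangle_left x p w
      linarith
    have ha : 0 < infDist x M := hdist_pos x hx
    have hb : 0 < infDist p M := hdist_pos p (htω hpt)
    have hlip : infDist x M ≤ infDist p M + dist x p := infDist_le_infDist_add_dist
    refine ⟨p, hpt, mem_closedBall.mpr ?_⟩
    nlinarith [dist_nonneg (x := x) (y := p)]
  -- overlap bound for t
  have hN0 : ∀ y : EuclideanSpace ℝ (Fin d),
      {p | p ∈ t ∧ y ∈ closedBall p ((1 + ζ) * c * infDist p M)}.encard ≤ (⌈K⌉₊ : ℕ∞) := by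
    intro y
    set Sy := {p | p ∈ t ∧ y ∈ closedBall p ((1 + ζ) * c * infDist p M)} with hSy
    rcases Sy.eq_empty_or_nonempty with hSe | ⟨p0, hp0⟩
    · simp [hSe]
    set D := infDist y M with hD
    have hkey : ∀ p ∈ Sy, c₀ * infDist p M ≤ D ∧ D ≤ 2 * infDist p M := by
      rintro p ⟨hpt, hpb⟩
      rw [mem_closedBall] at hpb
      have h1 : infDist p M ≤ D + dist y p := by
        rw [hD, dist_comm y p]; exact infDist_le_infDist_add_dist
      have h2 : D ≤ infDist p M + dist y p := infDist_le_infDist_add_dist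
      have hp' : 0 ≤ infDist p M := infDist_nonneg
      constructor <;> nlinarith
    have hDpos : 0 < D := by
      have h := hkey p0 hp0
      have := hdist_pos p0 (htω hp0.1)
      nlinarith
    by_contra hcon
    push_neg at hcon
    have hle : ((⌈K⌉₊ + 1 : ℕ) : ℕ∞) ≤ Sy.encard := by
      push_cast
      exact Order.add_one_le_of_lt hcon
    obtain ⟨F, hFSy, hFcard⟩ := Set.exists_subset_encard_eq hle
    have hFfin : F.Finite := Set.finite_of_encard_eq_coe hFcard
    have hFcard' : hFfin.toFinset.card = ⌈K⌉₊ + 1 := by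
      have := hFfin.encard_eq_coe_toFinset_card
      rw [hFcard] at this
      exact_mod_cast this.symm
    have hcount := aux_count hFfin.toFinset (fun p => c / 5 * infDist p M) y
      (3 * D / c₀) (c * D / 10) (by positivity) (by positivity)
      (htdisj.subset (by simpa using hFSy.trans (fun p hp => hp.1)))
      (fun p hp => by
        have hp' := hkey p (hFSy (hFfin.mem_toFinset.mp hp))
        nlinarith [hdist_pos p (htω (hFSy (hFfin.mem_toFinset.mp hp)).1)])
      (fun p hp => by
        intro w hw
        rw [mem_closedBall] at hw ⊢
        have hpSy := hFSy (hFfin.mem_toFinset.mp hp)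
        have hp' := hkey p hpSy
        have hpb := hpSy.2
        rw [mem_closedBall] at hpb
        have hpm : 0 < infDist p M := hdist_pos p (htω hpSy.1)
        have hdp : infDist p M ≤ D / c₀ := by
          rw [le_div_iff₀ hc₀]; linarith [hp'.1]
        have h5 : c / 5 + (1 + ζ) * c ≤ 3 := by nlinarith
        calc dist w y ≤ dist w p + dist p y := dist_triangle w p y
          _ = dist w p + dist y p := by rw [dist_comm p y]
          _ ≤ c / 5 * infDist p M + (1 + ζ) * c * infDist p M := by linarith
          _ = (c / 5 + (1 + ζ) * c) * infDist p M := by ring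
          _ ≤ 3 * (D / c₀) := mul_le_mul h5 hdp hpm.le (by norm_num)
          _ = 3 * D / c₀ := by ring)
    have hEq : (3 * D / c₀) ^ d = K * (c * D / 10) ^ d := by
      rw [hKdef, ← mul_pow]
      congr 1
      field_simp
      ring
    rw [hEq] at hcount
    have hapos : (0:ℝ) < (c * D / 10) ^ d := by positivity
    have hcard : (hFfin.toFinset.card : ℝ) ≤ K := le_of_mul_le_mul_right hcount hapos
    rw [hFcard'] at hcard
    push_cast at hcard
    have := Nat.le_ceil K
    linarith
  -- padding sequence near a point of M
  obtain ⟨m, hmM⟩ := hMne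
  have hmcl : m ∈ closure ω := frontier_subset_closure (hMfr hmM)
  have hmω : m ∉ ω := hfrω m (hMfr hmM)
  have hnear : ∀ ε : ℝ, 0 < ε → ∃ w, w ∈ ω ∧ dist w m < ε := by
    intro ε hε
    obtain ⟨w, hw1, hw2⟩ := Metric.mem_closure_iff.mp hmcl ε hε
    exact ⟨w, hw1, by rwa [dist_comm]⟩
  have hgex : ∃ g : EuclideanSpace ℝ (Fin d) → EuclideanSpace ℝ (Fin d),
      ∀ w ∈ ω, g w ∈ ω ∧ dist (g w) m < c₀ / 4 * dist w m := by
    refine ⟨fun w => if h : 0 < dist w m then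
      (hnear (c₀ / 4 * dist w m) (mul_pos (by positivity) h)).choose else w, ?_⟩
    intro w hw
    have hd : 0 < dist w m := dist_pos.mpr (fun h => hmω (h ▸ hw))
    simp only [dif_pos hd]
    exact (hnear (c₀ / 4 * dist w m) (mul_pos (by positivity) hd)).choose_spec
  obtain ⟨g, hg⟩ := hgex
  obtain ⟨z0, hz0ω, -⟩ := hnear 1 one_pos
  set z : ℕ → EuclideanSpace ℝ (Fin d) := fun n => g^[n] z0 with hzdef
  have hzsucc : ∀ n, z (n + 1) = g (z n) := fun n => Function.iterate_succ_apply' g n z0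
  have hzω : ∀ n, z n ∈ ω := by
    intro n
    induction n with
    | zero => exact hz0ω
    | succ n ih => rw [hzsucc]; exact (hg _ ih).1
  have hzpos : ∀ n, 0 < dist (z n) m := fun n => dist_pos.mpr (fun h => hmω (h ▸ hzω n))
  have hzstep : ∀ n, dist (z (n + 1)) m < c₀ / 4 * dist (z n) m := by
    intro n; rw [hzsucc]; exact (hg _ (hzω n)).2
  have hc₀1 : c₀ ≤ 1 := by rw [hc₀def]; nlinarith
  have hzanti : StrictAnti (fun n => dist (z n) m) := by
    apply strictAnti_nat_of_succ_lt
    intro n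
    have h1 := hzstep n
    have h2 := hzpos n
    nlinarith
  have hzlt : ∀ j k : ℕ, j < k → dist (z k) m < c₀ / 4 * dist (z j) m := by
    intro j k hjk
    have h1 : dist (z k) m ≤ dist (z (j + 1)) m := by
      rcases eq_or_lt_of_le (Nat.succ_le_of_lt hjk) with h | h
      · rw [← h]
      · exact (hzanti h).le
    exact h1.trans_lt (hzstep j)
  have hann : ∀ n, ∀ w ∈ closedBall (z n) ((1 + ζ) * c * infDist (z n) M),
      c₀ * dist (z n) m ≤ dist w m ∧ dist w m ≤ 2 * dist (z n) m := by
    intro n w hw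
    rw [mem_closedBall] at hw
    have hi : infDist (z n) M ≤ dist (z n) m := infDist_le_dist_of_mem hmM
    have hipos : 0 ≤ infDist (z n) M := infDist_nonneg
    have t1 : dist w m ≤ dist w (z n) + dist (z n) m := dist_triangle w (z n) m
    have t2 : dist (z n) m ≤ dist (z n) w + dist w m := dist_triangle (z n) w m
    rw [dist_comm (z n) w] at t2
    constructor <;> nlinarith [hzpos n]
  have hpad : ∀ y : EuclideanSpace ℝ (Fin d),
      {n : ℕ | y ∈ closedBall (z n) ((1 + ζ) * c * infDist (z n) M)}.Subsingleton := by
    intro y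
    have haux : ∀ j k : ℕ, j < k →
        y ∈ closedBall (z j) ((1 + ζ) * c * infDist (z j) M) →
        y ∈ closedBall (z k) ((1 + ζ) * c * infDist (z k) M) → False := by
      intro j k hjk hj hk
      have h1 := (hann j y hj).1
      have h2 := (hann k y hk).2
      have h3 := hzlt j k hjk
      have h4 := hzpos j
      nlinarith
    intro n1 hn1 n2 hn2
    rcases lt_trichotomy n1 n2 with h | h | h
    · exact absurd (haux n1 n2 h hn1 hn2) not_false
    · exact h
    · exact absurd (haux n2 n1 h hn2 hn1) not_false
  have hzinj : Function.Injective z := by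
    intro a b hab
    rcases lt_trichotomy a b with h | h | h
    · have := hzanti h; simp only [hab] at this; exact absurd this (lt_irrefl _)
    · exact h
    · have := hzanti h; simp only [hab] at this; exact absurd this (lt_irrefl _)
  -- enumeration of t ∪ range z
  set u : Set (EuclideanSpace ℝ (Fin d)) := t ∪ Set.range z with hudef
  have huω : u ⊆ ω := union_subset htω (range_subset_iff.mpr hzω)
  have hucount : u.Countable := htcount.union (countable_range z)
  have huinf : u.Infinite := (Set.infinite_range_of_injective hzinj).mono subset_union_right
  haveI := hucount.to_subtype
  haveI := huinf.to_subtype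
  obtain ⟨Denu⟩ := nonempty_denumerable ↥u
  set e : ℕ ≃ ↥u := (Denumerable.eqv ↥u).symm with hedef
  refine ⟨fun n => (e n : EuclideanSpace ℝ (Fin d)), fun n => huω (e n).2, ?_, ?_⟩
  · intro w hw
    obtain ⟨p, hpt, hball⟩ := hcover w hw
    refine Set.mem_iUnion.mpr ⟨e.symm ⟨p, Or.inl hpt⟩, ?_⟩
    simpa [Equiv.apply_symm_apply] using hball
  · intro y
    have hxinj : Function.Injective (fun n => (e n : EuclideanSpace ℝ (Fin d))) :=
      Subtype.val_injective.comp e.injective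
    have himg : (fun n => (e n : EuclideanSpace ℝ (Fin d))) ''
        {i : ℕ | y ∈ Metric.closedBall ((e i : EuclideanSpace ℝ (Fin d)))
          ((1 + ζ) * c * Metric.infDist ((e i : EuclideanSpace ℝ (Fin d))) M)} ⊆
        {p | p ∈ t ∧ y ∈ closedBall p ((1 + ζ) * c * infDist p M)} ∪
        (z '' {n : ℕ | y ∈ closedBall (z n) ((1 + ζ) * c * infDist (z n) M)}) := by
      rintro q ⟨i, hiA, rfl⟩
      rcases (e i).2 with hqt | ⟨n, hn⟩
      · exact Or.inl ⟨hqt, hiA⟩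
      · refine Or.inr ⟨n, ?_, hn⟩
        show y ∈ closedBall (z n) ((1 + ζ) * c * infDist (z n) M)
        rw [hn]
        exact hiA
    calc ({i : ℕ | y ∈ Metric.closedBall ((e i : EuclideanSpace ℝ (Fin d)))
          ((1 + ζ) * c * Metric.infDist ((e i : EuclideanSpace ℝ (Fin d))) M)}).encard
        = ((fun n => (e n : EuclideanSpace ℝ (Fin d))) ''
            {i : ℕ | y ∈ Metric.closedBall ((e i : EuclideanSpace ℝ (Fin d)))
              ((1 + ζ) * c * Metric.infDist ((e i : EuclideanSpace ℝ (Fin d))) M)}).encard :=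
          (Set.InjOn.encard_image hxinj.injOn).symm
      _ ≤ ({p | p ∈ t ∧ y ∈ closedBall p ((1 + ζ) * c * infDist p M)} ∪
            (z '' {n : ℕ | y ∈ closedBall (z n) ((1 + ζ) * c * infDist (z n) M)})).encard :=
          Set.encard_mono himg
      _ ≤ ({p | p ∈ t ∧ y ∈ closedBall p ((1 + ζ) * c * infDist p M)}).encard +
            (z '' {n : ℕ | y ∈ closedBall (z n) ((1 + ζ) * c * infDist (z n) M)}).encard :=
          Set.encard_union_le _ _
      _ ≤ (⌈K⌉₊ : ℕ∞) + 1 :=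
          add_le_add (hN0 y) (Set.encard_le_one_iff.mpr (fun a b ha hb => (hpad y).image z ha hb))
      _ = ((⌈K⌉₊ + 1 : ℕ) : ℕ∞) := by push_cast; rfl
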